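/- Let ι be a finite index set and, for each i ∈ ι, let M_i be a positive semidefinite (m+n)×(m+n) complex matrix, written in block form M_i = [[A_i, B_i], [B_iᴴ, C_i]] with A_i the m×m top-left block. Let M := Σ_{i ∈ ι} M_i with top-left block A := Σ_{i ∈ ι} A_i. If rank(M) = rank(A) (i.e., M is flat over its top-left block), then rank(M_i) = rank(A_i) for every i ∈ ι (i.e., each summand M_i is flat over its top-left block). -/

import Mathlib

open Matrix
open scoped ComplexOrder

set_option maxHeartbeats 1000000 in
set_option synthInstance.maxHeartbeats 200000 in
/-- Key lemma: for a PSD block matrix `M = [[A, B], [Bᴴ, C]]`, flatness over the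
top-left block (`rank M = rank A`) is equivalent to: every `v` extends to a kernel
vector `(u, v)` of `M`. -/
theorem flat_iff_ker_surj {m n : ℕ} (A : Matrix (Fin m) (Fin m) ℂ)
    (B : Matrix (Fin m) (Fin n) ℂ) (C : Matrix (Fin n) (Fin n) ℂ)
    (M : Matrix (Fin m ⊕ Fin n) (Fin m ⊕ Fin n) ℂ)
    (hM : M = Matrix.fromBlocks A B Bᴴ C)
    (hpsd : M.PosSemidef) :
    M.rank = A.rank ↔
      ∀ v : Fin n → ℂ, ∃ u : Fin m → ℂ, M *ᵥ Sum.elim u v = 0 := by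
  let f : ((Fin m ⊕ Fin n) → ℂ) →ₗ[ℂ] ((Fin m ⊕ Fin n) → ℂ) := M.mulVecLin
  let q : LinearMap.ker f →ₗ[ℂ] (Fin n → ℂ) :=
    (LinearMap.funLeft ℂ ℂ Sum.inr).comp (LinearMap.ker f).subtype
  have hfapp : ∀ x, f x = M *ᵥ x := fun x => rfl
  have hqapp : ∀ (x : LinearMap.ker f), q x = (x : (Fin m ⊕ Fin n) → ℂ) ∘ Sum.inr :=
    fun x => rfl
  -- if `A u = 0` then `M (u,0) = 0`
  have hAextend : ∀ u : Fin m → ℂ, A *ᵥ u = 0 → M *ᵥ Sum.elim u 0 = 0 := by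
    intro u hu
    rw [← hpsd.dotProduct_mulVec_zero_iff]
    have h1 : M *ᵥ Sum.elim u 0 = Sum.elim (A *ᵥ u) (Bᴴ *ᵥ u) := by
      rw [hM, Matrix.fromBlocks_mulVec, Sum.elim_comp_inl, Sum.elim_comp_inr,
        Matrix.mulVec_zero, Matrix.mulVec_zero, add_zero, add_zero]
    have hstar : star (Sum.elim u (0 : Fin n → ℂ)) = Sum.elim (star u) 0 := by
      funext x
      cases x <;> simp only [Pi.star_apply, Sum.elim_inl, Sum.elim_inr, star_zero,
        Pi.zero_apply]
    rw [h1, hstar, sumElim_dotProduct_sumElim, hu, dotProduct_zero,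
      zero_dotProduct, add_zero]
  have hmemf : ∀ u : Fin m → ℂ, A *ᵥ u = 0 → Sum.elim u 0 ∈ LinearMap.ker f := by
    intro u hu
    exact LinearMap.mem_ker.mpr (hAextend u hu)
  -- the kernel of q is isomorphic to the kernel of A
  have hkerq : Module.finrank ℂ (LinearMap.ker q) =
      Module.finrank ℂ (LinearMap.ker A.mulVecLin) := by
    let g : LinearMap.ker A.mulVecLin →ₗ[ℂ] LinearMap.ker q :=
      { toFun := fun u => ⟨⟨Sum.elim u.1 0, hmemf u.1 (LinearMap.mem_ker.mp u.2)⟩,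
          LinearMap.mem_ker.mpr (by funext j; rfl)⟩
        map_add' := by
          intro u v
          apply Subtype.ext; apply Subtype.ext
          show Sum.elim (u.1 + v.1) 0 = Sum.elim u.1 0 + Sum.elim v.1 0
          funext x
          cases x <;> simp only [Sum.elim_inl, Sum.elim_inr, Pi.add_apply,
            Pi.zero_apply, add_zero]
        map_smul' := by
          intro c u
          apply Subtype.ext; apply Subtype.ext
          show Sum.elim (c • u.1) 0 = c • Sum.elim u.1 0
          funext x
          cases x <;> simp only [Sum.elim_inl, Sum.elim_inr, Pi.smul_apply,
            Pi.zero_apply, smul_zero] }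
    have hbij : Function.Bijective g := by
      constructor
      · intro u v huv
        apply Subtype.ext
        funext j
        have := congrArg (fun w : LinearMap.ker q =>
          ((w : LinearMap.ker f) : (Fin m ⊕ Fin n) → ℂ) (Sum.inl j)) huv
        exact this
      · rintro ⟨⟨x, hx⟩, hx2⟩
        have hx2' : x ∘ Sum.inr = 0 := LinearMap.mem_ker.mp hx2
        have hxe : x = Sum.elim (x ∘ Sum.inl) 0 := by
          funext w
          cases w with
          | inl j => rfl
          | inr j => exact congrFun hx2' j
        have hAx : A *ᵥ (x ∘ Sum.inl) = 0 := by
          have hx' : M *ᵥ x = 0 := LinearMap.mem_ker.mp hx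
          have h2 : M *ᵥ Sum.elim (x ∘ Sum.inl) (x ∘ Sum.inr) = 0 := by
            rwa [Sum.elim_comp_inl_inr]
          rw [hM, Matrix.fromBlocks_mulVec] at h2
          have h3 : A *ᵥ (x ∘ Sum.inl) + B *ᵥ (x ∘ Sum.inr) = 0 := by
            funext j; exact congrFun h2 (Sum.inl j)
          rw [hx2', Matrix.mulVec_zero, add_zero] at h3
          exact h3
        refine ⟨⟨x ∘ Sum.inl, LinearMap.mem_ker.mpr hAx⟩, ?_⟩
        apply Subtype.ext; apply Subtype.ext
        exact hxe.symm
    exact (LinearEquiv.ofBijective g hbij).finrank_eq.symm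
  -- finrank bookkeeping
  have hrn : Module.finrank ℂ (LinearMap.range q) + Module.finrank ℂ (LinearMap.ker q)
      = Module.finrank ℂ (LinearMap.ker f) := LinearMap.finrank_range_add_finrank_ker q
  have hMrank : M.rank + Module.finrank ℂ (LinearMap.ker f) = m + n := by
    have h := LinearMap.finrank_range_add_finrank_ker f
    have h2 : Module.finrank ℂ ((Fin m ⊕ Fin n) → ℂ) = m + n := by
      simp [Module.finrank_fintype_fun_eq_card]
    rw [h2] at h
    exact h
  have hArank : A.rank + Module.finrank ℂ (LinearMap.ker A.mulVecLin) = m := by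
    have h := LinearMap.finrank_range_add_finrank_ker A.mulVecLin
    rw [Module.finrank_fintype_fun_eq_card] at h
    simp only [Fintype.card_fin] at h
    exact h
  have hrange_le : Module.finrank ℂ (LinearMap.range q) ≤ n := by
    have := Submodule.finrank_le (LinearMap.range q)
    simpa [Module.finrank_fintype_fun_eq_card] using this
  -- surjectivity characterization
  have hsurj_iff : Function.Surjective q ↔
      ∀ v : Fin n → ℂ, ∃ u : Fin m → ℂ, M *ᵥ Sum.elim u v = 0 := by
    constructor
    · intro hs v
      obtain ⟨x, hxv⟩ := hs v
      refine ⟨(x : (Fin m ⊕ Fin n) → ℂ) ∘ Sum.inl, ?_⟩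
      have hxv' : (x : (Fin m ⊕ Fin n) → ℂ) ∘ Sum.inr = v := hxv
      have hxx : (Sum.elim ((x : (Fin m ⊕ Fin n) → ℂ) ∘ Sum.inl) v)
          = (x : (Fin m ⊕ Fin n) → ℂ) := by
        rw [← hxv']; exact Sum.elim_comp_inl_inr _
      rw [hxx]
      exact LinearMap.mem_ker.mp x.2
    · intro h v
      obtain ⟨u, hu⟩ := h v
      exact ⟨⟨Sum.elim u v, LinearMap.mem_ker.mpr hu⟩, rfl⟩
  rw [← hsurj_iff]
  constructor
  · intro hrank
    have h1 : Module.finrank ℂ (LinearMap.range q) = n := by omega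
    have h2 : LinearMap.range q = ⊤ := by
      apply Submodule.eq_top_of_finrank_eq
      rw [h1, Module.finrank_fintype_fun_eq_card]
      simp
    exact LinearMap.range_eq_top.mp h2
  · intro hs
    have h2 : LinearMap.range q = ⊤ := LinearMap.range_eq_top.mpr hs
    have h1 : Module.finrank ℂ (LinearMap.range q) = n := by
      rw [h2]
      simpa [Module.finrank_fintype_fun_eq_card] using finrank_top ℂ (Fin n → ℂ)
    omega

theorem flat_sum_implies_flat_summands {m n : ℕ} {ι : Type*} [Fintype ι]
    (A : ι → Matrix (Fin m) (Fin m) ℂ) (B : ι → Matrix (Fin m) (Fin n) ℂ)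
    (C : ι → Matrix (Fin n) (Fin n) ℂ)
    (hpsd : ∀ i, (Matrix.fromBlocks (A i) (B i) (B i)ᴴ (C i)).PosSemidef)
    (hflat : (∑ i, Matrix.fromBlocks (A i) (B i) (B i)ᴴ (C i)).rank = (∑ i, A i).rank) :
    ∀ i, (Matrix.fromBlocks (A i) (B i) (B i)ᴴ (C i)).rank = (A i).rank := by
  -- the sum of the block matrices is the block matrix of sums
  have hsum : (∑ i, Matrix.fromBlocks (A i) (B i) (B i)ᴴ (C i))
      = Matrix.fromBlocks (∑ i, A i) (∑ i, B i) (∑ i, B i)ᴴ (∑ i, C i) := by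
    ext x y
    cases x <;> cases y <;>
      simp [Matrix.sum_apply, Matrix.conjTranspose_apply]
  have hpsdsum : (∑ i, Matrix.fromBlocks (A i) (B i) (B i)ᴴ (C i)).PosSemidef := by
    apply Finset.sum_induction _ _ (fun a b ha hb => ha.add hb)
    · exact Matrix.PosSemidef.zero
    · intro i _; exact hpsd i
  have hker := (flat_iff_ker_surj (∑ i, A i) (∑ i, B i) (∑ i, C i) _ hsum hpsdsum).mp hflat
  intro i
  rw [flat_iff_ker_surj (A i) (B i) (C i) _ rfl (hpsd i)]
  intro v
  obtain ⟨u, hu⟩ := hker v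
  refine ⟨u, ?_⟩
  set x := Sum.elim u v with hx
  -- each quadratic form is nonneg and they sum to zero
  have hsum0 : ∑ j, star x ⬝ᵥ (Matrix.fromBlocks (A j) (B j) (B j)ᴴ (C j) *ᵥ x) = 0 := by
    have h1 : ∑ j, star x ⬝ᵥ (Matrix.fromBlocks (A j) (B j) (B j)ᴴ (C j) *ᵥ x)
        = star x ⬝ᵥ ((∑ j, Matrix.fromBlocks (A j) (B j) (B j)ᴴ (C j)) *ᵥ x) := by
      simp only [dotProduct, Matrix.mulVec, Matrix.sum_apply, Finset.sum_apply,
        Finset.mul_sum, Finset.sum_mul]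
      rw [Finset.sum_comm]
      apply Finset.sum_congr rfl
      intro k _
      rw [Finset.sum_comm]
    rw [h1, hu, dotProduct_zero]
  have hterm0 : star x ⬝ᵥ (Matrix.fromBlocks (A i) (B i) (B i)ᴴ (C i) *ᵥ x) = 0 := by
    have hnn : ∀ j ∈ Finset.univ, (0:ℂ) ≤ star x ⬝ᵥ (Matrix.fromBlocks (A j) (B j) (B j)ᴴ (C j) *ᵥ x) :=
      fun j _ => (hpsd j).dotProduct_mulVec_nonneg x
    exact (Finset.sum_eq_zero_iff_of_nonneg hnn).mp hsum0 i (Finset.mem_univ i)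
  exact (hpsd i).dotProduct_mulVec_zero_iff x |>.mp hterm0
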